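/- (Corollary 2.2) There exists h₀ > 0, depending only on Ω⁺ and B, such that for every admissible h < h₀ the following holds: if u is a real-valued function on Ω_h⁺ with D_ν u = 0 on every interval of I_h⁺ (1 ≤ ν ≤ d), then u is constant on Ω_h⁺; and similarly, if u is a function on Ω_h⁻ with D_ν u = 0 on every interval of I_h⁻, then u is constant on Ω_h⁻. -/

import Mathlib

open scoped BigOperators

namespace DiscretePotential

/-- Points of `ℝ^d`, regarded as functions `Fin d → ℝ`. -/
abbrev Pt (d : ℕ) := Fin d → ℝ

/-- A grid interval is encoded by its lower endpoint `x` and its direction `ν`;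
it represents the segment `[x, x + h e_ν]`. -/
abbrev Iv (d : ℕ) := Pt d × Fin d

/-- The closed cube with corner `a` and side length `L`. -/
def cube {d : ℕ} (a : Pt d) (L : ℝ) : Set (Pt d) := Set.Icc a fun i => a i + L

/-- `Γ` is a `C²` hypersurface: near each of its points it is the zero set of a
`C²` function with nonvanishing derivative. -/
def IsC2Hypersurface {d : ℕ} (Γ : Set (Pt d)) : Prop :=
  ∀ x ∈ Γ, ∃ (U : Set (Pt d)) (F : Pt d → ℝ), IsOpen U ∧ x ∈ U ∧ ContDiff ℝ 2 F ∧
    (∀ y ∈ U, (y ∈ Γ ↔ F y = 0)) ∧ ∀ y ∈ U, fderiv ℝ F y ≠ 0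

/-- The geometric setup: `d ∈ {2,3}`, a closed cube `B` (with corner `a` and side `L`),
and a bounded open connected set `Ω⁺` with `C²` boundary whose closure lies in the
interior of `B`, such that `Ω⁻ = int B \ closure Ω⁺` is connected. -/
structure Setup (d : ℕ) : Type where
  dim : d = 2 ∨ d = 3
  a : Pt d
  L : ℝ
  Lpos : 0 < L
  Ωp : Set (Pt d)
  isOpen_Ωp : IsOpen Ωp
  bounded_Ωp : Bornology.IsBounded Ωp
  connected_Ωp : IsConnected Ωp
  closure_subset : closure Ωp ⊆ interior (cube a L)
  c2_boundary : IsC2Hypersurface (frontier Ωp)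
  connected_Ωm : IsConnected (interior (cube a L) \ closure Ωp)

/-- `x` is a point of the lattice `hℤ^d`. -/
def IsLattice {d : ℕ} (h : ℝ) (x : Pt d) : Prop := ∀ i, ∃ m : ℤ, x i = m * h

/-- `x + h e_ν`. -/
def step {d : ℕ} (h : ℝ) (x : Pt d) (ν : Fin d) : Pt d := fun i => x i + if i = ν then h else 0

/-- `x - h e_ν`. -/
def stepm {d : ℕ} (h : ℝ) (x : Pt d) (ν : Fin d) : Pt d := fun i => x i - if i = ν then h else 0

namespace Setup

variable {d : ℕ} (S : Setup d)

/-- The cube `B`. -/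
def B : Set (Pt d) := cube S.a S.L

/-- `Ω⁻ = int B \ closure Ω⁺`. -/
def Ωm : Set (Pt d) := interior S.B \ closure S.Ωp

/-- `h` is admissible: `h > 0` and `B` is a union of cells of the lattice `hℤ^d`. -/
def Admissible (h : ℝ) : Prop :=
  0 < h ∧ (∀ i, ∃ m : ℤ, S.a i = m * h) ∧ ∃ n : ℕ, S.L = n * h

/-- Grid points lying in `Ω⁺`. -/
def Ωhp (h : ℝ) : Set (Pt d) := {x | IsLattice h x ∧ x ∈ S.Ωp}

/-- Grid points lying in `Ω⁻`. -/
def Ωhm (h : ℝ) : Set (Pt d) := {x | IsLattice h x ∧ x ∈ S.Ωm}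

/-- Grid points on `∂B`. -/
def bdB (h : ℝ) : Set (Pt d) := {x | IsLattice h x ∧ x ∈ frontier S.B}

/-- `I` is a grid interval: it joins adjacent grid points of `B`. -/
def IsGridIv (h : ℝ) (I : Iv d) : Prop :=
  IsLattice h I.1 ∧ I.1 ∈ S.B ∧ step h I.1 I.2 ∈ S.B

/-- `I_h⁺`: grid intervals with both endpoints in `Ω_h⁺`. -/
def Ip (h : ℝ) : Set (Iv d) := {I | S.IsGridIv h I ∧ I.1 ∈ S.Ωp ∧ step h I.1 I.2 ∈ S.Ωp}

/-- `I_h⁻`: grid intervals of `B` with both endpoints outside `Ω⁺`. -/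
def Im (h : ℝ) : Set (Iv d) := {I | S.IsGridIv h I ∧ I.1 ∉ S.Ωp ∧ step h I.1 I.2 ∉ S.Ωp}

/-- `I_h^cut`: grid intervals with one endpoint in `Ω_h⁺` and one in `Ω_h⁻`. -/
def Icut (h : ℝ) : Set (Iv d) :=
  {I | S.IsGridIv h I ∧
    ((I.1 ∈ S.Ωp ∧ step h I.1 I.2 ∈ S.Ωm) ∨ (I.1 ∈ S.Ωm ∧ step h I.1 I.2 ∈ S.Ωp))}

/-- A choice of `Γ_h¹`: for each cut interval `I = [x, x + h e_ν]`, the assigned point is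
`x* = x + (s I) h e_ν`, at distance at least `δh` from both endpoints, i.e. `δ ≤ s I ≤ 1 - δ`. -/
def IsGammaChoice (h δ : ℝ) (s : Iv d → ℝ) : Prop :=
  ∀ I ∈ S.Icut h, δ ≤ s I ∧ s I ≤ 1 - δ

open Classical in
/-- The indicator function `χ` of `Ω⁺`. -/
noncomputable def chi (x : Pt d) : ℝ := if x ∈ S.Ωp then 1 else 0

/-- `ξ^ν(I) = s χ(x) + (1-s) χ(x + h e_ν)` (this is `1` on `I_h⁺` and `0` on `I_h⁻`). -/
noncomputable def xi (h : ℝ) (s : Iv d → ℝ) (I : Iv d) : ℝ :=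
  s I * S.chi I.1 + (1 - s I) * S.chi (step h I.1 I.2)

/-- `D_ν χ` on the interval `I`. -/
noncomputable def Dchi (h : ℝ) (I : Iv d) : ℝ := (S.chi (step h I.1 I.2) - S.chi I.1) / h

open Classical in
/-- An element of `ℱ(Ω̄_h⁺)` is encoded by a function `f` (its values on `Ω_h⁺`) together
with `g : Iv d → ℝ` recording, for each cut interval, the extended value at its endpoint
in `Ω_h⁻`.  `valP f g I x` is the resulting value at the endpoint `x` of the interval `I`. -/
noncomputable def valP (f : Pt d → ℝ) (g : Iv d → ℝ) (I : Iv d) (x : Pt d) : ℝ :=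
  if x ∈ S.Ωp then f x else g I

open Classical in
/-- An element of `ℱ(Ω̄_h⁻)` is encoded by a function `f` (its values on `Ω_h⁻ ∪ ∂B_h`)
together with `g : Iv d → ℝ` recording, for each cut interval, the extended value at its
endpoint in `Ω_h⁺`.  `valM f g I x` is the resulting value at the endpoint `x` of `I`. -/
noncomputable def valM (f : Pt d → ℝ) (g : Iv d → ℝ) (I : Iv d) (x : Pt d) : ℝ :=
  if x ∈ S.Ωp then g I else f x

/-- Divided difference `D_ν u` on the interval `I`, for `u = (f,g) ∈ ℱ(Ω̄_h⁺)`. -/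
noncomputable def DP (h : ℝ) (f : Pt d → ℝ) (g : Iv d → ℝ) (I : Iv d) : ℝ :=
  (S.valP f g I (step h I.1 I.2) - S.valP f g I I.1) / h

/-- Divided difference `D_ν u` on the interval `I`, for `u = (f,g) ∈ ℱ(Ω̄_h⁻)`. -/
noncomputable def DM (h : ℝ) (f : Pt d → ℝ) (g : Iv d → ℝ) (I : Iv d) : ℝ :=
  (S.valM f g I (step h I.1 I.2) - S.valM f g I I.1) / h

/-- The discrete Laplacian `Δ_h u` at `x`, for `u = (f,g) ∈ ℱ(Ω̄_h⁺)` (extended values are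
used across cut intervals). -/
noncomputable def lapP (h : ℝ) (f : Pt d → ℝ) (g : Iv d → ℝ) (x : Pt d) : ℝ :=
  ∑ ν : Fin d, (S.valP f g (x, ν) (step h x ν) - 2 * f x
      + S.valP f g (stepm h x ν, ν) (stepm h x ν)) / h ^ 2

/-- The discrete Laplacian `Δ_h u` at `x`, for `u = (f,g) ∈ ℱ(Ω̄_h⁻)`. -/
noncomputable def lapM (h : ℝ) (f : Pt d → ℝ) (g : Iv d → ℝ) (x : Pt d) : ℝ :=
  ∑ ν : Fin d, (S.valM f g (x, ν) (step h x ν) - 2 * f x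
      + S.valM f g (stepm h x ν, ν) (stepm h x ν)) / h ^ 2

/-- The interpolated boundary value `(Mu)(x*)` at the assigned point of the cut interval `I`,
for `u = (f,g) ∈ ℱ(Ω̄_h⁺)`. -/
noncomputable def MP (h : ℝ) (s : Iv d → ℝ) (f : Pt d → ℝ) (g : Iv d → ℝ) (I : Iv d) : ℝ :=
  (1 - s I) * S.valP f g I I.1 + s I * S.valP f g I (step h I.1 I.2)

/-- The interpolated boundary value `(Mu)(x*)` at the assigned point of the cut interval `I`,
for `u = (f,g) ∈ ℱ(Ω̄_h⁻)`. -/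
noncomputable def MM (h : ℝ) (s : Iv d → ℝ) (f : Pt d → ℝ) (g : Iv d → ℝ) (I : Iv d) : ℝ :=
  (1 - s I) * S.valM f g I I.1 + s I * S.valM f g I (step h I.1 I.2)

/-- The inner product `⟨u,v⟩⁺ = Σ_{I ∈ I_h⁺ ∪ I_h^cut} (D_ν u)(D_ν v) ξ^ν h^d`. -/
noncomputable def ipP (h : ℝ) (s : Iv d → ℝ) (f : Pt d → ℝ) (g : Iv d → ℝ)
    (f' : Pt d → ℝ) (g' : Iv d → ℝ) : ℝ :=
  ∑ᶠ I ∈ S.Ip h ∪ S.Icut h, S.DP h f g I * S.DP h f' g' I * S.xi h s I * h ^ d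

/-- The inner product `⟨u,v⟩⁻ = Σ_{I ∈ I_h⁻ ∪ I_h^cut} (D_ν u)(D_ν v)(1 - ξ^ν) h^d`. -/
noncomputable def ipM (h : ℝ) (s : Iv d → ℝ) (f : Pt d → ℝ) (g : Iv d → ℝ)
    (f' : Pt d → ℝ) (g' : Iv d → ℝ) : ℝ :=
  ∑ᶠ I ∈ S.Im h ∪ S.Icut h, S.DM h f g I * S.DM h f' g' I * (1 - S.xi h s I) * h ^ d

/-- `u = (f,g) ∈ ℱ(Ω̄_h⁺)` is discrete harmonic on `Ω_h⁺`. -/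
def IsHarmP (h : ℝ) (f : Pt d → ℝ) (g : Iv d → ℝ) : Prop :=
  ∀ x ∈ S.Ωhp h, S.lapP h f g x = 0

/-- `u = (f,g) ∈ ℱ(Ω̄_h⁻)` is discrete harmonic on `Ω_h⁻`. -/
def IsHarmM (h : ℝ) (f : Pt d → ℝ) (g : Iv d → ℝ) : Prop :=
  ∀ x ∈ S.Ωhm h, S.lapM h f g x = 0

/-- `f` vanishes on `∂B_h` (required of elements of `ℱ(Ω̄_h⁻)`). -/
def VanishBd (h : ℝ) (f : Pt d → ℝ) : Prop := ∀ x ∈ S.bdB h, f x = 0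

/-- `(v⁺, v⁻) = Sψ` is the single layer with boundary values `ψ ∈ ℱ(Γ_h¹)`
(functions on `Γ_h¹` are encoded as functions on the cut intervals). -/
def IsSingleLayer (h : ℝ) (s ψ : Iv d → ℝ) (vp : Pt d → ℝ) (gp : Iv d → ℝ)
    (vm : Pt d → ℝ) (gm : Iv d → ℝ) : Prop :=
  S.IsHarmP h vp gp ∧ (∀ I ∈ S.Icut h, S.MP h s vp gp I = ψ I) ∧
  S.IsHarmM h vm gm ∧ (∀ I ∈ S.Icut h, S.MM h s vm gm I = ψ I) ∧ S.VanishBd h vm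

/-- `(u⁺, u⁻)` is the double layer with jump `φ ∈ ℱ(Γ_h¹)`. -/
def IsDoubleLayer (h : ℝ) (s φ : Iv d → ℝ) (up : Pt d → ℝ) (gp : Iv d → ℝ)
    (um : Pt d → ℝ) (gm : Iv d → ℝ) : Prop :=
  S.IsHarmP h up gp ∧ S.IsHarmM h um gm ∧ S.VanishBd h um ∧
  (∀ I ∈ S.Icut h, S.MP h s up gp I - S.MM h s um gm I = φ I) ∧
  (∀ I ∈ S.Icut h, S.DP h up gp I = S.DM h um gm I)

/-- `‖ψ‖² = ⟨v⁺,v⁺⟩⁺ + ⟨v⁻,v⁻⟩⁻` for the single layer `(v⁺,v⁻) = Sψ`. -/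
noncomputable def energy (h : ℝ) (s : Iv d → ℝ) (vp : Pt d → ℝ) (gp : Iv d → ℝ)
    (vm : Pt d → ℝ) (gm : Iv d → ℝ) : ℝ :=
  S.ipP h s vp gp vp gp + S.ipM h s vm gm vm gm

end Setup

section Aux
open Metric Relation Set

variable {d : ℕ}

/-- unit vector -/
def evec (ν : Fin d) : Pt d := fun i => if i = ν then 1 else 0

lemma step_eq (h : ℝ) (x : Pt d) (ν : Fin d) : step h x ν = x + h • evec ν := by
  funext i; simp [step, evec, mul_ite]

lemma stepm_eq (h : ℝ) (x : Pt d) (ν : Fin d) : stepm h x ν = x + (-h) • evec ν := by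
  funext i; simp [stepm, evec, mul_ite]; ring

lemma norm_evec_le (ν : Fin d) : ‖evec ν‖ ≤ 1 := by
  rw [pi_norm_le_iff_of_nonneg zero_le_one]
  intro i; simp [evec]; split <;> simp

lemma step_stepm (h : ℝ) (x : Pt d) (ν : Fin d) : step h (stepm h x ν) ν = x := by
  funext i; simp [step, stepm]

lemma stepm_step (h : ℝ) (x : Pt d) (ν : Fin d) : stepm h (step h x ν) ν = x := by
  funext i; simp [step, stepm]

lemma isLattice_step {h : ℝ} {x : Pt d} (hx : IsLattice h x) (ν : Fin d) :
    IsLattice h (step h x ν) := by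
  intro i; obtain ⟨m, hm⟩ := hx i
  by_cases hiν : i = ν
  · subst hiν; exact ⟨m + 1, by simp [step, hm]; push_cast; ring⟩
  · exact ⟨m, by simp [step, hiν, hm]⟩

lemma isLattice_stepm {h : ℝ} {x : Pt d} (hx : IsLattice h x) (ν : Fin d) :
    IsLattice h (stepm h x ν) := by
  intro i; obtain ⟨m, hm⟩ := hx i
  by_cases hiν : i = ν
  · subst hiν; exact ⟨m - 1, by simp [stepm, hm]; push_cast; ring⟩
  · exact ⟨m, by simp [stepm, hiν, hm]⟩

lemma dist_step {h : ℝ} (hh : 0 ≤ h) (x : Pt d) (ν : Fin d) : dist (step h x ν) x ≤ h := by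
  rw [dist_pi_le_iff hh]
  intro i; simp [step, Real.dist_eq]; split <;> simp [hh, abs_of_nonneg hh]

lemma dist_stepm {h : ℝ} (hh : 0 ≤ h) (x : Pt d) (ν : Fin d) : dist (stepm h x ν) x ≤ h := by
  rw [dist_pi_le_iff hh]
  intro i; simp [stepm, Real.dist_eq]; split <;> simp [hh, abs_of_nonneg hh]

/-- adjacency on the grid with allowed vertex set `A` -/
def Adj (h : ℝ) (A : Set (Pt d)) (x y : Pt d) : Prop :=
  IsLattice h x ∧ IsLattice h y ∧ x ∈ A ∧ y ∈ A ∧ ∃ ν, y = step h x ν ∨ x = step h y ν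

lemma Adj.symm' {h : ℝ} {A : Set (Pt d)} : Symmetric (Adj h A) := by
  rintro x y ⟨h1, h2, h3, h4, ν, h5⟩
  exact ⟨h2, h1, h4, h3, ν, h5.symm⟩

lemma adj_chain_congr {h : ℝ} {A : Set (Pt d)} {u : Pt d → ℝ}
    (hu : ∀ x y, Adj h A x y → u x = u y) {x y : Pt d}
    (hc : ReflTransGen (Adj h A) x y) : u x = u y := by
  induction hc with
  | refl => rfl
  | tail _ hadj ih => exact ih.trans (hu _ _ hadj)


section GridPath
variable {h : ℝ} {A : Set (Pt d)}

lemma grid_path_aux (hh : 0 < h) :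
    ∀ n : ℕ, ∀ v v' : Pt d, IsLattice h v → IsLattice h v' →
    (∃ k : Fin d → ℤ, (∀ i, v' i - v i = k i * h) ∧ ∑ i, (k i).natAbs ≤ n) →
    (∀ z : Pt d, IsLattice h z →
      (∀ i, min (v i) (v' i) ≤ z i ∧ z i ≤ max (v i) (v' i)) → z ∈ A) →
    ReflTransGen (Adj h A) v v' := by
  intro n
  induction n with
  | zero =>
    rintro v v' hv hv' ⟨k, hk, hsum⟩ _
    have hz : ∀ i, k i = 0 := by
      intro i
      have := Finset.sum_eq_zero_iff.mp (Nat.le_zero.mp hsum) i (Finset.mem_univ i)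
      omega
    have : v = v' := by
      funext i
      have h1 := hk i
      rw [hz i] at h1
      push_cast at h1
      linarith
    rw [this]
  | succ n ih =>
    rintro v v' hv hv' ⟨k, hk, hsum⟩ hbox
    by_cases hz : ∀ i, k i = 0
    · have : v = v' := by
        funext i
        have h1 := hk i
        rw [hz i] at h1
        push_cast at h1
        linarith
      rw [this]
    · push_neg at hz
      obtain ⟨i, hi⟩ := hz
      -- step from v towards v' in coordinate i
      set v₂ : Pt d := if 0 < k i then step h v i else stepm h v i with hv₂def
      have hv₂lat : IsLattice h v₂ := by
        rw [hv₂def]; split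
        · exact isLattice_step hv i
        · exact isLattice_stepm hv i
      have hv₂i : v₂ i = if 0 < k i then v i + h else v i - h := by
        rw [hv₂def]; split <;> simp [step, stepm]
      have hv₂j : ∀ j, j ≠ i → v₂ j = v j := by
        intro j hj
        rw [hv₂def]; split <;> simp [step, stepm, hj]
      -- the new integer vector
      set sgn : ℤ := if 0 < k i then 1 else -1 with hsgn
      set k' : Fin d → ℤ := Function.update k i (k i - sgn) with hk'
      have hknei : k i ≠ 0 := hi
      have habs : (k i - sgn).natAbs = (k i).natAbs - 1 ∧ 1 ≤ (k i).natAbs := by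
        rw [hsgn]; split <;> omega
      have hk'sum : ∑ j, (k' j).natAbs ≤ n := by
        have habsf : (fun j => (k' j).natAbs)
            = Function.update (fun j => (k j).natAbs) i ((k i - sgn).natAbs) := by
          funext j
          by_cases hj : j = i
          · subst hj; simp [hk']
          · simp [hk', Function.update_of_ne hj]
        have : ∑ j, (k' j).natAbs = ∑ j, (k j).natAbs - 1 := by
          calc ∑ j, (k' j).natAbs
              = ∑ j, Function.update (fun j => (k j).natAbs) i ((k i - sgn).natAbs) j := by
                rw [← habsf]
            _ = ∑ j, (k j).natAbs - 1 := by
                rw [Finset.sum_update_of_mem (Finset.mem_univ i), habs.1]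
                have h1 : 1 ≤ (k i).natAbs := habs.2
                have h2 : ∑ j, (k j).natAbs
                    = ∑ j ∈ Finset.univ \ {i}, (k j).natAbs + (k i).natAbs :=
                  Finset.sum_eq_sum_sdiff_singleton_add (Finset.mem_univ i) _
                omega
        omega
      have hk'prop : ∀ j, v' j - v₂ j = k' j * h := by
        intro j
        by_cases hj : j = i
        · subst hj
          rw [hv₂i, hk', Function.update_self, hsgn]
          have := hk j
          split <;> push_cast <;> nlinarith [hk j]
        · rw [hv₂j j hj, hk', Function.update_of_ne hj]
          exact hk j
      -- coordinate i of v₂ lies between v i and v' i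
      have hvvi : v' i - v i = k i * h := hk i
      have hbetween : min (v i) (v' i) ≤ v₂ i ∧ v₂ i ≤ max (v i) (v' i) := by
        rw [hv₂i]
        rcases lt_or_ge 0 (k i) with hki | hki
        · have h1 : (1:ℝ) ≤ k i := by
            have : (1:ℤ) ≤ k i := hki
            exact_mod_cast this
          simp only [if_pos hki]
          constructor
          · exact le_trans (min_le_left _ _) (by linarith)
          · refine le_trans ?_ (le_max_right _ _)
            nlinarith
        · have hki' : k i < 0 := lt_of_le_of_ne hki hknei
          have h1 : (k i : ℝ) ≤ -1 := by
            have : k i ≤ -1 := by omega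
            exact_mod_cast this
          simp only [if_neg (not_lt.mpr hki)]
          constructor
          · refine le_trans (min_le_right _ _) ?_
            nlinarith
          · exact le_trans (by linarith) (le_max_left _ _)
      have hvbox : ∀ j, min (v j) (v' j) ≤ v₂ j ∧ v₂ j ≤ max (v j) (v' j) := by
        intro j
        by_cases hj : j = i
        · subst hj; exact hbetween
        · rw [hv₂j j hj]
          exact ⟨min_le_left _ _, le_max_left _ _⟩
      have hvA : v ∈ A := hbox v hv (fun j => ⟨min_le_left _ _, le_max_left _ _⟩)
      have hv₂A : v₂ ∈ A := hbox v₂ hv₂lat hvbox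
      have hadj : Adj h A v v₂ := by
        refine ⟨hv, hv₂lat, hvA, hv₂A, i, ?_⟩
        rw [hv₂def]; split
        · exact Or.inl rfl
        · exact Or.inr (by rw [step_stepm])
      refine ReflTransGen.head hadj (ih v₂ v' hv₂lat hv' ⟨k', hk'prop, hk'sum⟩ ?_)
      intro z hz hzbox
      refine hbox z hz (fun j => ?_)
      have h1 := (hzbox j).1
      have h2 := (hzbox j).2
      have h3 := (hvbox j).1
      have h4 := (hvbox j).2
      exact ⟨le_trans (le_min h3 (min_le_right _ _)) h1,
        le_trans h2 (max_le h4 (le_max_right _ _))⟩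
end GridPath

section Chains
variable {h : ℝ} {A Ω : Set (Pt d)}

/-- auxiliary chain relation in an open set: small steps with uniform clearance -/
def Rrel (Ω : Set (Pt d)) (ε δ : ℝ) (u v : Pt d) : Prop :=
  dist u v ≤ ε ∧ closedBall u δ ⊆ Ω ∧ closedBall v δ ⊆ Ω

lemma Rrel_symm {ε δ : ℝ} : Symmetric (Rrel Ω ε δ) := by
  rintro u v ⟨h1, h2, h3⟩; exact ⟨by rwa [dist_comm], h3, h2⟩

lemma Rrel_mono {ε δ δ' : ℝ} (hδ : δ' ≤ δ) {u v : Pt d} (hr : Rrel Ω ε δ u v) :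
    Rrel Ω ε δ' u v :=
  ⟨hr.1, (closedBall_subset_closedBall hδ).trans hr.2.1,
    (closedBall_subset_closedBall hδ).trans hr.2.2⟩

lemma chain_of_seq {R : Pt d → Pt d → Prop} (w : ℕ → Pt d) :
    ∀ m : ℕ, (∀ i < m, R (w i) (w (i + 1))) → ReflTransGen R (w 0) (w m) := by
  intro m
  induction m with
  | zero => intro _; exact ReflTransGen.refl
  | succ m ih =>
    intro hr
    exact ReflTransGen.tail (ih fun i hi => hr i (by omega)) (hr m (by omega))

lemma seg_chain {y : Pt d} {r : ℝ} (hr : 0 < r) (hball : closedBall y r ⊆ Ω)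
    {x : Pt d} (hx : dist x y ≤ r / 2) {ε : ℝ} (hε : 0 < ε) :
    ReflTransGen (Rrel Ω ε (r / 2)) x y := by
  obtain ⟨m, hm⟩ := exists_nat_gt (dist x y / ε)
  have hm1 : 1 ≤ m := by
    rcases Nat.eq_zero_or_pos m with rfl | hpos
    · exfalso
      rw [Nat.cast_zero] at hm
      exact absurd hm (not_lt.mpr (by positivity))
    · exact hpos
  have hmpos : (0:ℝ) < m := by exact_mod_cast hm1
  have hstep : dist x y / m ≤ ε := by
    rw [div_le_iff₀ hmpos]
    have := (div_lt_iff₀ hε).mp hm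
    nlinarith
  set w : ℕ → Pt d := fun i => x + ((i : ℝ) / m) • (y - x) with hw
  have hw0 : w 0 = x := by simp [hw]
  have hwm : w m = y := by
    simp only [hw]
    rw [div_self (ne_of_gt hmpos)]
    simp
  have hfrac : ∀ i : ℕ, i ≤ m → 0 ≤ 1 - (i:ℝ)/m ∧ 1 - (i:ℝ)/m ≤ 1 := by
    intro i hi
    have h1 : (i:ℝ) ≤ m := by exact_mod_cast hi
    have h2 : 0 ≤ (i:ℝ)/m := by positivity
    constructor
    · have : (i:ℝ)/m ≤ 1 := by rw [div_le_one hmpos]; exact h1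
      linarith
    · linarith
  have hdistw : ∀ i, i ≤ m → dist (w i) y ≤ r / 2 := by
    intro i hi
    have heq : w i - y = (1 - (i:ℝ)/m) • (x - y) := by
      simp only [hw]; module
    rw [dist_eq_norm, heq, norm_smul, Real.norm_eq_abs,
      abs_of_nonneg (hfrac i hi).1]
    calc (1 - (i:ℝ)/m) * ‖x - y‖ ≤ 1 * ‖x - y‖ := by
          have := (hfrac i hi).2
          have := norm_nonneg (x - y)
          nlinarith
      _ = dist x y := by rw [one_mul, dist_eq_norm]
      _ ≤ r / 2 := hx
  have hedge : ∀ i, i < m → Rrel Ω ε (r/2) (w i) (w (i+1)) := by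
    intro i hi
    have heq : w (i+1) - w i = ((1:ℝ)/m) • (y - x) := by
      simp only [hw]
      push_cast
      module
    refine ⟨?_, ?_, ?_⟩
    · rw [dist_comm, dist_eq_norm, heq, norm_smul, Real.norm_eq_abs,
        abs_of_nonneg (by positivity : (0:ℝ) ≤ 1/m)]
      calc 1/(m:ℝ) * ‖y - x‖ = dist x y / m := by
            rw [dist_eq_norm, norm_sub_rev]; ring
        _ ≤ ε := hstep
    · refine subset_trans (closedBall_subset_closedBall' ?_) hball
      have := hdistw i (le_of_lt hi)
      linarith
    · refine subset_trans (closedBall_subset_closedBall' ?_) hball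
      have := hdistw (i+1) hi
      linarith
  have := chain_of_seq w m hedge
  rwa [hw0, hwm] at this


/-- two points are chain-connected in `Ω` with some uniform clearance -/
def ChainRel (Ω : Set (Pt d)) (x y : Pt d) : Prop :=
  ∃ δ > 0, ∀ ε > 0, ReflTransGen (Rrel Ω ε δ) x y

lemma chainRel_refl {x : Pt d} (hδ : ∃ δ : ℝ, 0 < δ) : ChainRel Ω x x := by
  obtain ⟨δ, h⟩ := hδ
  exact ⟨δ, h, fun ε _ => ReflTransGen.refl⟩

lemma chainRel_symm {x y : Pt d} (hxy : ChainRel Ω x y) : ChainRel Ω y x := by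
  obtain ⟨δ, hδ, hc⟩ := hxy
  exact ⟨δ, hδ, fun ε hε => (@Relation.ReflTransGen.stdSymm _ _ ⟨fun _ _ hab => Rrel_symm hab⟩).symm _ _ (hc ε hε)⟩

lemma chainRel_trans {x y z : Pt d} (h1 : ChainRel Ω x y) (h2 : ChainRel Ω y z) :
    ChainRel Ω x z := by
  obtain ⟨δ1, hδ1, hc1⟩ := h1
  obtain ⟨δ2, hδ2, hc2⟩ := h2
  refine ⟨min δ1 δ2, lt_min hδ1 hδ2, fun ε hε => ReflTransGen.trans
    (ReflTransGen.mono (fun a b hr => Rrel_mono (min_le_left _ _) hr) _ _ (hc1 ε hε))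
    (ReflTransGen.mono (fun a b hr => Rrel_mono (min_le_right _ _) hr) _ _ (hc2 ε hε))⟩

lemma chainRel_of_close {y : Pt d} {r : ℝ} (hr : 0 < r)
    (hball : closedBall y (2 * r) ⊆ Ω) {x : Pt d} (hx : dist x y ≤ r) :
    ChainRel Ω x y := by
  refine ⟨r, hr, fun ε hε => ?_⟩
  have h2r : (0:ℝ) < 2 * r := by linarith
  have := seg_chain h2r hball (x := x) (by linarith) hε
  simpa using ReflTransGen.mono (fun a b hrel => Rrel_mono (by linarith) hrel) _ _ this

/-- in an open preconnected set, any two points are chain-connected -/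
lemma chainRel_of_mem (hΩ : IsOpen Ω) (hconn : IsPreconnected Ω)
    {x y : Pt d} (hx : x ∈ Ω) (hy : y ∈ Ω) : ChainRel Ω x y := by
  -- radius function
  have hrad : ∀ z ∈ Ω, ∃ r : ℝ, 0 < r ∧ closedBall z (2 * r) ⊆ Ω := by
    intro z hz
    obtain ⟨ρ, hρ, hball⟩ := Metric.isOpen_iff.mp hΩ z hz
    refine ⟨ρ / 3, by linarith, ?_⟩
    refine subset_trans ?_ hball
    intro w hw
    simp only [mem_closedBall] at hw
    exact mem_ball.mpr (by linarith)
  classical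
  set U1 : Set (Pt d) :=
    ⋃ (w : Pt d) (r : ℝ) (_ : w ∈ Ω ∧ ChainRel Ω x w ∧ 0 < r ∧ closedBall w (2*r) ⊆ Ω),
      ball w r with hU1
  set U2 : Set (Pt d) :=
    ⋃ (w : Pt d) (r : ℝ) (_ : w ∈ Ω ∧ ¬ ChainRel Ω x w ∧ 0 < r ∧ closedBall w (2*r) ⊆ Ω),
      ball w r with hU2
  have hU1open : IsOpen U1 := isOpen_iUnion fun w => isOpen_iUnion fun r =>
    isOpen_iUnion fun _ => isOpen_ball
  have hU2open : IsOpen U2 := isOpen_iUnion fun w => isOpen_iUnion fun r =>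
    isOpen_iUnion fun _ => isOpen_ball
  have hchain_of_ball : ∀ w r (z : Pt d), w ∈ Ω → 0 < r → closedBall w (2*r) ⊆ Ω →
      z ∈ ball w r → ChainRel Ω z w := by
    intro w r z hw hr hball hz
    exact chainRel_of_close hr hball (le_of_lt (mem_ball.mp hz))
  have hdisj : Disjoint U1 U2 := by
    rw [Set.disjoint_left]
    rintro z hz1 hz2
    simp only [hU1, hU2, mem_iUnion] at hz1 hz2
    obtain ⟨w1, r1, ⟨hw1, hcw1, hr1, hb1⟩, hz1⟩ := hz1
    obtain ⟨w2, r2, ⟨hw2, hcw2, hr2, hb2⟩, hz2⟩ := hz2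
    exact hcw2 (chainRel_trans (chainRel_trans hcw1
      (chainRel_symm (hchain_of_ball w1 r1 z hw1 hr1 hb1 hz1)))
      (hchain_of_ball w2 r2 z hw2 hr2 hb2 hz2))
  have hcover : Ω ⊆ U1 ∪ U2 := by
    intro z hz
    obtain ⟨r, hr, hball⟩ := hrad z hz
    by_cases hc : ChainRel Ω x z
    · exact Or.inl (mem_iUnion.mpr ⟨z, mem_iUnion.mpr ⟨r, mem_iUnion.mpr
        ⟨⟨hz, hc, hr, hball⟩, mem_ball_self hr⟩⟩⟩)
    · exact Or.inr (mem_iUnion.mpr ⟨z, mem_iUnion.mpr ⟨r, mem_iUnion.mpr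
        ⟨⟨hz, hc, hr, hball⟩, mem_ball_self hr⟩⟩⟩)
  have hxU1 : (Ω ∩ U1).Nonempty := by
    obtain ⟨r, hr, hball⟩ := hrad x hx
    exact ⟨x, hx, mem_iUnion.mpr ⟨x, mem_iUnion.mpr ⟨r, mem_iUnion.mpr
      ⟨⟨hx, chainRel_refl ⟨r, hr⟩, hr, hball⟩, mem_ball_self hr⟩⟩⟩⟩
  have hsub : Ω ⊆ U1 :=
    hconn.subset_left_of_subset_union hU1open hU2open hdisj hcover hxU1
  have hyU1 := hsub hy
  simp only [hU1, mem_iUnion] at hyU1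
  obtain ⟨w, r, ⟨hw, hcw, hr, hball⟩, hyb⟩ := hyU1
  exact chainRel_trans hcw (chainRel_symm (hchain_of_ball w r y hw hr hball hyb))

/-- uniform chain connectivity over a compact subset -/
lemma chain_unif (hΩ : IsOpen Ω) (hconn : IsPreconnected Ω)
    {K : Set (Pt d)} (hK : IsCompact K) (hKΩ : K ⊆ Ω) :
    ∃ δ > 0, ∀ ε > 0, ∀ x ∈ K, ∀ y ∈ K, ReflTransGen (Rrel Ω ε δ) x y := by
  classical
  rcases K.eq_empty_or_nonempty with rfl | hKne
  · exact ⟨1, one_pos, fun ε _ x hx => absurd hx (notMem_empty x)⟩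
  have hrad : ∀ z : K, ∃ r : ℝ, 0 < r ∧ closedBall (z : Pt d) (2 * r) ⊆ Ω := by
    intro z
    obtain ⟨ρ, hρ, hball⟩ := Metric.isOpen_iff.mp hΩ z (hKΩ z.2)
    refine ⟨ρ / 3, by linarith, fun w hw => hball (mem_ball.mpr ?_)⟩
    simp only [mem_closedBall] at hw
    linarith
  choose rad hradpos hradball using hrad
  have hcover : K ⊆ ⋃ z : K, ball (z : Pt d) (rad z) :=
    fun z hz => mem_iUnion.mpr ⟨⟨z, hz⟩, mem_ball_self (hradpos ⟨z, hz⟩)⟩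
  obtain ⟨T, hT⟩ := hK.elim_finite_subcover (fun z : K => ball (z : Pt d) (rad z))
    (fun _ => isOpen_ball) hcover
  have hTne : T.Nonempty := by
    obtain ⟨k, hk⟩ := hKne
    have hmem := hT hk
    simp only [mem_iUnion] at hmem
    obtain ⟨z, hzT, _⟩ := hmem
    exact ⟨z, hzT⟩
  have hpair : ∀ z z' : K, ∃ δ > 0, ∀ ε > 0,
      ReflTransGen (Rrel Ω ε δ) (z : Pt d) (z' : Pt d) := by
    intro z z'
    exact chainRel_of_mem hΩ hconn (hKΩ z.2) (hKΩ z'.2)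
  choose δp hδppos hδpchain using hpair
  set δT : ℝ := T.inf' hTne rad with hδT
  set δP : ℝ := (T ×ˢ T).inf' (hTne.product hTne) (fun p => δp p.1 p.2) with hδP
  refine ⟨min δT δP, lt_min ?_ ?_, ?_⟩
  · rw [hδT, Finset.lt_inf'_iff]
    exact fun z _ => hradpos z
  · rw [hδP, Finset.lt_inf'_iff]
    exact fun p _ => hδppos p.1 p.2
  intro ε hε x hx y hy
  obtain ⟨zx, hzxT, hxball⟩ : ∃ z ∈ T, x ∈ ball (z : Pt d) (rad z) := by
    have := hT hx
    simp only [mem_iUnion] at this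
    obtain ⟨z, hzT, hball⟩ := this
    exact ⟨z, hzT, hball⟩
  obtain ⟨zy, hzyT, hyball⟩ : ∃ z ∈ T, y ∈ ball (z : Pt d) (rad z) := by
    have := hT hy
    simp only [mem_iUnion] at this
    obtain ⟨z, hzT, hball⟩ := this
    exact ⟨z, hzT, hball⟩
  have hδ1 : min δT δP ≤ rad zx := le_trans (min_le_left _ _)
    (Finset.inf'_le _ hzxT)
  have hδ2 : min δT δP ≤ rad zy := le_trans (min_le_left _ _)
    (Finset.inf'_le _ hzyT)
  have hmempair : (zx, zy) ∈ T ×ˢ T := Finset.mem_product.mpr ⟨hzxT, hzyT⟩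
  have hδ3 : min δT δP ≤ δp zx zy := le_trans (min_le_right _ _)
    (Finset.inf'_le (fun p => δp p.1 p.2) hmempair)
  have hc1 : ReflTransGen (Rrel Ω ε (rad zx)) x (zx : Pt d) := by
    have := seg_chain (by linarith [hradpos zx] : (0:ℝ) < 2 * rad zx)
      (hradball zx) (x := x) (by
        have := mem_ball.mp hxball
        linarith) hε
    exact ReflTransGen.mono (fun a b hr => Rrel_mono (by linarith) hr) _ _ this
  have hc2 : ReflTransGen (Rrel Ω ε (rad zy)) y (zy : Pt d) := by
    have := seg_chain (by linarith [hradpos zy] : (0:ℝ) < 2 * rad zy)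
      (hradball zy) (x := y) (by
        have := mem_ball.mp hyball
        linarith) hε
    exact ReflTransGen.mono (fun a b hr => Rrel_mono (by linarith) hr) _ _ this
  refine ReflTransGen.trans (ReflTransGen.mono (fun a b hr => Rrel_mono hδ1 hr) _ _ hc1)
    (ReflTransGen.trans (ReflTransGen.mono (fun a b hr => Rrel_mono hδ3 hr) _ _ (hδpchain zx zy ε hε))
      ((@Relation.ReflTransGen.stdSymm _ _ ⟨fun _ _ hab => Rrel_symm hab⟩).symm _ _
        (ReflTransGen.mono (fun a b hr => Rrel_mono hδ2 hr) _ _ hc2)))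

end Chains

section Shadow
variable {h : ℝ} {A Ω : Set (Pt d)}

noncomputable def roundPt (h : ℝ) (w : Pt d) : Pt d := fun i => ⌊w i / h⌋ * h

lemma isLattice_roundPt (h : ℝ) (w : Pt d) : IsLattice h (roundPt h w) :=
  fun i => ⟨⌊w i / h⌋, rfl⟩

lemma roundPt_eq_self {x : Pt d} (hh : 0 < h) (hx : IsLattice h x) :
    roundPt h x = x := by
  funext i
  obtain ⟨m, hm⟩ := hx i
  have hq : ((m:ℝ) * h) / h = m := by field_simp
  rw [roundPt, hm, hq]
  simp

lemma dist_roundPt (hh : 0 < h) (w : Pt d) : dist (roundPt h w) w ≤ h := by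
  rw [dist_pi_le_iff hh.le]
  intro i
  rw [Real.dist_eq, roundPt]
  have h1 : (⌊w i / h⌋ : ℝ) ≤ w i / h := Int.floor_le _
  have h2 : w i / h < ⌊w i / h⌋ + 1 := Int.lt_floor_add_one _
  have e : w i / h * h = w i := div_mul_cancel₀ _ hh.ne'
  rw [abs_le]
  constructor <;> nlinarith

lemma grid_path (hh : 0 < h) {v v' : Pt d} (hv : IsLattice h v) (hv' : IsLattice h v')
    (hbox : ∀ z : Pt d, IsLattice h z →
      (∀ i, min (v i) (v' i) ≤ z i ∧ z i ≤ max (v i) (v' i)) → z ∈ A) :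
    ReflTransGen (Adj h A) v v' := by
  have hex : ∀ i, ∃ m : ℤ, v' i - v i = m * h := by
    intro i
    obtain ⟨m, hm⟩ := hv i
    obtain ⟨m', hm'⟩ := hv' i
    exact ⟨m' - m, by rw [hm, hm']; push_cast; ring⟩
  choose k hk using hex
  exact grid_path_aux hh (∑ i, (k i).natAbs) v v' hv hv' ⟨k, hk, le_refl _⟩ hbox

lemma abs_sub_le_of_between {a b z u : ℝ} (h1 : min a b ≤ z) (h2 : z ≤ max a b)
    (ha : |a - u| ≤ c) (hb : |b - u| ≤ c) : |z - u| ≤ c := by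
  rw [abs_le] at *
  rcases le_total a b with hab | hab
  · rw [min_eq_left hab] at h1
    rw [max_eq_right hab] at h2
    constructor <;> linarith
  · rw [min_eq_right hab] at h1
    rw [max_eq_left hab] at h2
    constructor <;> linarith

/-- shadow one `Rrel` edge on the grid -/
lemma shadow_edge (hh : 0 < h) (hΩA : Ω ⊆ A) {δ ε : ℝ} (hεh : h ≤ ε)
    (hεδ : 2 * ε + h ≤ δ) {u v : Pt d} (hr : Rrel Ω ε δ u v) :
    ReflTransGen (Adj h A) (roundPt h u) (roundPt h v) := by
  refine grid_path hh (isLattice_roundPt h u) (isLattice_roundPt h v) ?_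
  intro z hz hzbox
  refine hΩA (hr.2.1 ?_)
  rw [mem_closedBall, dist_pi_le_iff (by linarith [dist_nonneg (x := u) (y := v)] : (0:ℝ) ≤ δ)]
  intro i
  rw [Real.dist_eq]
  have hRu : |roundPt h u i - u i| ≤ h := by
    have := dist_roundPt hh u
    have := dist_le_pi_dist (roundPt h u) u i
    rw [Real.dist_eq] at this
    linarith
  have hRv : |roundPt h v i - u i| ≤ h + ε := by
    have h1 := dist_le_pi_dist (roundPt h v) v i
    have h2 := dist_le_pi_dist u v i
    have h3 := dist_roundPt hh v
    have h4 := hr.1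
    rw [Real.dist_eq] at h1 h2
    calc |roundPt h v i - u i| ≤ |roundPt h v i - v i| + |v i - u i| := by
          have := abs_sub_le (roundPt h v i) (v i) (u i)
          exact this
      _ ≤ h + ε := by
          rw [abs_sub_comm (v i) (u i)]
          linarith
  have := abs_sub_le_of_between (hzbox i).1 (hzbox i).2
    (le_trans hRu (by linarith) : |roundPt h u i - u i| ≤ h + ε) hRv
  linarith

/-- shadow a whole chain -/
lemma shadow_chain (hh : 0 < h) (hΩA : Ω ⊆ A) {δ ε : ℝ} (hεh : h ≤ ε)
    (hεδ : 2 * ε + h ≤ δ) {x y : Pt d} (hc : ReflTransGen (Rrel Ω ε δ) x y)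
    (hx : IsLattice h x) (hy : IsLattice h y) :
    ReflTransGen (Adj h A) x y := by
  have main : ReflTransGen (Adj h A) (roundPt h x) (roundPt h y) := by
    clear hx hy
    induction hc with
    | refl => exact ReflTransGen.refl
    | tail _ hr ih => exact ih.trans (shadow_edge hh hΩA hεh hεδ hr)
  rwa [roundPt_eq_self hh hx, roundPt_eq_self hh hy] at main

end Shadow

section Analysis
variable {d : ℕ}

/-- mean value inequality in a coordinate direction -/
lemma mvt_dir {F : Pt d → ℝ} (hF : Differentiable ℝ F) {ν : Fin d} {a : Pt d}
    {τ c : ℝ} (hτ : 0 < τ)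
    (hder : ∀ t ∈ Icc (0:ℝ) τ, c ≤ fderiv ℝ F (a + t • evec ν) (evec ν)) :
    c * τ ≤ F (a + τ • evec ν) - F a := by
  set g : ℝ → ℝ := fun t => F (a + t • evec ν) with hg
  have hgd : ∀ t : ℝ, HasDerivAt g (fderiv ℝ F (a + t • evec ν) (evec ν)) t := by
    intro t
    have hinner : HasDerivAt (fun t : ℝ => a + t • evec ν) (evec ν) t := by
      have h1 : HasDerivAt (fun t : ℝ => t • evec ν) ((1:ℝ) • evec ν) t :=
        (hasDerivAt_id t).smul_const (evec ν)
      rw [one_smul] at h1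
      exact h1.const_add a
    exact ((hF (a + t • evec ν)).hasFDerivAt).comp_hasDerivAt t hinner
  obtain ⟨ξ, hξ, hslope⟩ := exists_hasDerivAt_eq_slope g
    (fun t => fderiv ℝ F (a + t • evec ν) (evec ν)) hτ
    (fun t _ => (hgd t).continuousAt.continuousWithinAt)
    (fun t _ => hgd t)
  have hc2 : c ≤ (g τ - g 0) / (τ - 0) := hslope ▸ hder ξ ⟨hξ.1.le, hξ.2.le⟩
  rw [sub_zero] at hc2
  have h3 : c * τ ≤ g τ - g 0 := by
    have := (le_div_iff₀ hτ).mp hc2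
    linarith
  have hg0 : g 0 = F a := by simp [hg]
  rw [hg0] at h3
  exact h3

lemma norm_smul_evec_le {t : ℝ} (ht : 0 ≤ t) (ν : Fin d) : ‖t • evec ν‖ ≤ t := by
  rw [norm_smul, Real.norm_eq_abs, abs_of_nonneg ht]
  nlinarith [norm_evec_le (d := d) ν, norm_nonneg (evec (d := d) ν)]

lemma dist_add_smul_evec (x p : Pt d) (t : ℝ) (ν : Fin d) :
    dist (x + t • evec ν) p ≤ dist x p + |t| := by
  calc dist (x + t • evec ν) p ≤ dist (x + t • evec ν) x + dist x p := dist_triangle _ _ _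
    _ ≤ dist x p + |t| := by
        have h1 : dist (x + t • evec ν) x = ‖t • evec ν‖ := by
          rw [dist_eq_norm, add_sub_cancel_left]
        have h2 : ‖t • evec ν‖ ≤ |t| := by
          rw [norm_smul, Real.norm_eq_abs]
          nlinarith [norm_evec_le (d := d) ν, norm_nonneg (evec (d := d) ν), abs_nonneg t]
        linarith

/-- propagation of membership through sets avoiding the frontier -/
lemma side_prop {Ωp : Set (Pt d)} (hopen : IsOpen Ωp) {s : Set (Pt d)}
    (hs : IsPreconnected s) (hdisj : ∀ z ∈ s, z ∉ frontier Ωp) {a b : Pt d}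
    (ha : a ∈ s) (hb : b ∈ s) :
    (a ∈ Ωp → b ∈ Ωp) ∧ (a ∉ closure Ωp → b ∉ closure Ωp) := by
  have hu : IsOpen Ωp := hopen
  have hv : IsOpen (closure Ωp)ᶜ := isClosed_closure.isOpen_compl
  have hdisj2 : Disjoint Ωp (closure Ωp)ᶜ := by
    rw [Set.disjoint_left]
    exact fun z hz hz2 => hz2 (subset_closure hz)
  have hcover : s ⊆ Ωp ∪ (closure Ωp)ᶜ := by
    intro z hz
    by_cases hc : z ∈ closure Ωp
    · left
      by_contra hzo
      exact hdisj z hz ⟨hc, by rwa [hopen.interior_eq]⟩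
    · right; exact hc
  constructor
  · intro haΩ
    exact hs.subset_left_of_subset_union hu hv hdisj2 hcover ⟨a, ha, haΩ⟩ hb
  · intro haC
    have := hs.subset_right_of_subset_union hu hv hdisj2 hcover ⟨a, ha, haC⟩
    exact this hb

/-- local data near a boundary point -/
structure LocDat (S : Setup d) (r₁ : ℝ) (p : Pt d) : Type where
  ρ : ℝ
  ν : Fin d
  F : Pt d → ℝ
  c : ℝ
  ρpos : 0 < ρ
  ρle : ρ ≤ r₁
  cpos : 0 < c
  hF : ContDiff ℝ 2 F
  hzero : ∀ y ∈ closedBall p ρ, (y ∈ frontier S.Ωp ↔ F y = 0)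
  hder : ∀ y ∈ closedBall p ρ, c ≤ fderiv ℝ F y (evec ν)

lemma exists_locDat (S : Setup d) {r₁ : ℝ} (hr₁ : 0 < r₁) {p : Pt d}
    (hp : p ∈ frontier S.Ωp) : Nonempty (LocDat S r₁ p) := by
  obtain ⟨U, F, hUopen, hpU, hF, hzero, hderne⟩ := S.c2_boundary p hp
  -- find a coordinate direction with nonzero derivative
  have hν : ∃ ν : Fin d, fderiv ℝ F p (evec ν) ≠ 0 := by
    by_contra hc
    push_neg at hc
    refine hderne p hpU ?_
    ext v
    have hv2 : v = ∑ i, v i • evec i := by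
      funext j
      rw [Finset.sum_apply]
      simp [evec]
    rw [hv2, map_sum]
    simp only [map_smul]
    simp [hc]
  obtain ⟨ν, hν⟩ := hν
  -- replace F by -F if necessary so the derivative is positive
  have main : ∀ G : Pt d → ℝ, ContDiff ℝ 2 G → (∀ y ∈ U, (y ∈ frontier S.Ωp ↔ G y = 0)) →
      0 < fderiv ℝ G p (evec ν) → Nonempty (LocDat S r₁ p) := by
    intro G hG hGzero hGpos
    set c : ℝ := fderiv ℝ G p (evec ν) / 2 with hc
    have hcpos : 0 < c := by positivity
    have hcont : Continuous fun y => fderiv ℝ G y (evec ν) :=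
      (hG.continuous_fderiv (by norm_num)).clm_apply continuous_const
    have hopen2 : IsOpen {y : Pt d | c < fderiv ℝ G y (evec ν)} :=
      isOpen_lt continuous_const hcont
    have hpin : p ∈ U ∩ {y : Pt d | c < fderiv ℝ G y (evec ν)} := by
      refine ⟨hpU, ?_⟩
      simp only [mem_setOf_eq, hc]
      linarith
    obtain ⟨ε, hε, hball⟩ := Metric.isOpen_iff.mp (hUopen.inter hopen2) p hpin
    refine ⟨⟨min (ε/2) r₁, ν, G, c, by positivity, min_le_right _ _, hcpos, hG, ?_, ?_⟩⟩
    · intro y hy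
      refine hGzero y (hball ?_).1
      rw [mem_closedBall] at hy
      rw [mem_ball]
      calc dist y p ≤ min (ε/2) r₁ := hy
        _ ≤ ε/2 := min_le_left _ _
        _ < ε := by linarith
    · intro y hy
      have := (hball (by
        rw [mem_closedBall] at hy
        rw [mem_ball]
        calc dist y p ≤ min (ε/2) r₁ := hy
          _ ≤ ε/2 := min_le_left _ _
          _ < ε := by linarith)).2
      exact le_of_lt this
  rcases lt_or_gt_of_ne hν with hneg | hpos
  · refine main (fun y => -(F y)) hF.neg (fun y hy => ?_) ?_
    · rw [hzero y hy]
      simp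
    · rw [fderiv_fun_neg]
      simp only [ContinuousLinearMap.neg_apply]
      linarith
  · exact main F hF hzero hpos

end Analysis

section Escape
variable {d : ℕ}

lemma escape_core (S : Setup d) {h r₁ : ℝ} (hh : 0 < h) {p : Pt d} (D : LocDat S r₁ p)
    {A : Set (Pt d)} {side : Pt d → Prop}
    (hsideA : ∀ y, y ∈ closedBall p (D.ρ/2) → side y → y ∈ A)
    (hside_prop : ∀ sset : Set (Pt d), IsPreconnected sset →
      (∀ z ∈ sset, z ∉ frontier S.Ωp) → ∀ a b : Pt d, a ∈ sset → b ∈ sset →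
      side a → side b)
    (hside_nf : ∀ y, side y → y ∉ frontier S.Ωp)
    (hh8 : h ≤ D.ρ/8) :
    ∀ n : ℕ, ∀ x : Pt d, IsLattice h x → side x →
      dist x p + (n : ℝ) * h ≤ D.ρ/2 →
      D.c * D.ρ / 8 ≤ |D.F x| + (n : ℝ) * (D.c * h) →
      ∃ z : Pt d, IsLattice h z ∧ side z ∧ z ∈ closedBall p (D.ρ/2) ∧
        D.c * D.ρ / 8 ≤ |D.F z| ∧ ReflTransGen (Adj h A) x z := by
  have hdiff : Differentiable ℝ D.F := D.hF.differentiable (by norm_num)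
  intro n
  induction n with
  | zero =>
    intro x hlx hsx hball hgain
    push_cast at hball hgain
    refine ⟨x, hlx, hsx, ?_, by linarith, ReflTransGen.refl⟩
    rw [mem_closedBall]
    linarith [dist_nonneg (x := x) (y := p)]
  | succ n ih =>
    intro x hlx hsx hball hgain
    push_cast at hball hgain
    by_cases hdone : D.c * D.ρ / 8 ≤ |D.F x|
    · refine ⟨x, hlx, hsx, ?_, hdone, ReflTransGen.refl⟩
      rw [mem_closedBall]
      have hn : (0:ℝ) ≤ (n : ℝ) * h := by positivity
      linarith
    push_neg at hdone
    have hρ8 : 0 < D.ρ := D.ρpos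
    have hxhalf : dist x p ≤ D.ρ/2 := by
      have hn : (0:ℝ) ≤ ((n : ℝ) + 1) * h := by positivity
      linarith
    have hxball : x ∈ closedBall p D.ρ := by
      rw [mem_closedBall]; linarith
    have hFx0 : D.F x ≠ 0 := by
      intro hzero
      exact hside_nf x hsx ((D.hzero x hxball).mpr hzero)
    -- distances of perturbed points
    have hptball : ∀ t : ℝ, |t| ≤ h → x + t • evec D.ν ∈ closedBall p D.ρ := by
      intro t ht
      rw [mem_closedBall]
      have := dist_add_smul_evec x p t D.ν
      linarith
    rcases lt_or_gt_of_ne hFx0 with hFneg | hFpos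
    · -- F x < 0 : walk downwards
      set x' := stepm h x D.ν with hx'def
      have hx'eq : x' = x + (-h) • evec D.ν := stepm_eq h x D.ν
      have hFt : ∀ t ∈ Icc (0:ℝ) h, D.c * t ≤ D.F x - D.F (x + (-t) • evec D.ν) := by
        intro t ht
        rcases eq_or_lt_of_le ht.1 with rfl | htpos
        · simp
        · have key := mvt_dir hdiff (a := x + (-t) • evec D.ν) (ν := D.ν)
            (c := D.c) htpos ?_
          · have hxx : x + (-t) • evec D.ν + t • evec D.ν = x := by
              rw [add_assoc, ← add_smul]
              simp
            rw [hxx] at key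
            linarith
          · intro u hu
            refine D.hder _ ?_
            have : x + (-t) • evec D.ν + u • evec D.ν = x + (u - t) • evec D.ν := by
              rw [add_assoc, ← add_smul]
              ring_nf
            rw [this]
            refine hptball (u - t) ?_
            rw [abs_le]
            constructor <;> linarith [hu.1, hu.2, ht.1, ht.2, hh.le]
      have hFneg' : ∀ t ∈ Icc (0:ℝ) h, D.F (x + (-t) • evec D.ν) < 0 := by
        intro t ht
        have := hFt t ht
        nlinarith [D.cpos, ht.1]
      set sset : Set (Pt d) := (fun t : ℝ => x + (-t) • evec D.ν) '' Icc 0 h with hsset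
      have hconn : IsPreconnected sset :=
        isPreconnected_Icc.image _ (by fun_prop)
      have hnf : ∀ z ∈ sset, z ∉ frontier S.Ωp := by
        rintro z ⟨t, ht, rfl⟩ hzf
        have hzb : x + (-t) • evec D.ν ∈ closedBall p D.ρ := by
          refine hptball (-t) ?_
          rw [abs_le]
          constructor <;> linarith [ht.1, ht.2]
        exact absurd ((D.hzero _ hzb).mp hzf) (ne_of_lt (hFneg' t ht))
      have hxs : x ∈ sset := ⟨0, ⟨le_refl 0, hh.le⟩, by simp⟩
      have hx's : x' ∈ sset :=
        ⟨h, ⟨hh.le, le_refl h⟩, show x + (-h) • evec D.ν = x' from hx'eq.symm⟩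
      have hsx' : side x' := hside_prop sset hconn hnf x x' hxs hx's hsx
      have hdx' : dist x' p ≤ dist x p + h := by
        rw [hx'eq]
        have := dist_add_smul_evec x p (-h) D.ν
        rw [abs_neg, abs_of_pos hh] at this
        exact this
      have hFx' : |D.F x| + D.c * h ≤ |D.F x'| := by
        have h1 := hFt h ⟨hh.le, le_refl h⟩
        have h2 := hFneg' h ⟨hh.le, le_refl h⟩
        rw [← hx'eq] at h1 h2
        rw [abs_of_neg hFneg, abs_of_neg h2]
        linarith
      have hadj : Adj h A x x' := by
        refine ⟨hlx, isLattice_stepm hlx D.ν, hsideA x (by rw [mem_closedBall]; exact hxhalf) hsx,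
          hsideA x' (by rw [mem_closedBall]; nlinarith [hdx', Nat.cast_nonneg (α := ℝ) n]) hsx',
          D.ν, Or.inr (step_stepm h x D.ν).symm⟩
      obtain ⟨z, hz1, hz2, hz3, hz4, hz5⟩ := ih x' (isLattice_stepm hlx D.ν) hsx'
        (by push_cast; nlinarith [Nat.cast_nonneg (α := ℝ) n])
        (by push_cast; nlinarith)
      exact ⟨z, hz1, hz2, hz3, hz4, ReflTransGen.head hadj hz5⟩
    · -- F x > 0 : walk upwards
      set x' := step h x D.ν with hx'def
      have hx'eq : x' = x + h • evec D.ν := step_eq h x D.ν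
      have hFt : ∀ t ∈ Icc (0:ℝ) h, D.c * t ≤ D.F (x + t • evec D.ν) - D.F x := by
        intro t ht
        rcases eq_or_lt_of_le ht.1 with rfl | htpos
        · simp
        · refine mvt_dir hdiff htpos ?_
          intro u hu
          refine D.hder _ (hptball u ?_)
          rw [abs_le]
          constructor <;> linarith [hu.1, hu.2, ht.2]
      have hFpos' : ∀ t ∈ Icc (0:ℝ) h, 0 < D.F (x + t • evec D.ν) := by
        intro t ht
        have := hFt t ht
        nlinarith [D.cpos, ht.1]
      set sset : Set (Pt d) := (fun t : ℝ => x + t • evec D.ν) '' Icc 0 h with hsset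
      have hconn : IsPreconnected sset :=
        isPreconnected_Icc.image _ (by fun_prop)
      have hnf : ∀ z ∈ sset, z ∉ frontier S.Ωp := by
        rintro z ⟨t, ht, rfl⟩ hzf
        have hzb : x + t • evec D.ν ∈ closedBall p D.ρ := by
          refine hptball t ?_
          rw [abs_le]
          constructor <;> linarith [ht.1, ht.2]
        exact absurd ((D.hzero _ hzb).mp hzf) (ne_of_gt (hFpos' t ht))
      have hxs : x ∈ sset := ⟨0, ⟨le_refl 0, hh.le⟩, by simp⟩
      have hx's : x' ∈ sset :=
        ⟨h, ⟨hh.le, le_refl h⟩, show x + h • evec D.ν = x' from hx'eq.symm⟩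
      have hsx' : side x' := hside_prop sset hconn hnf x x' hxs hx's hsx
      have hdx' : dist x' p ≤ dist x p + h := by
        rw [hx'eq]
        have := dist_add_smul_evec x p h D.ν
        rw [abs_of_pos hh] at this
        exact this
      have hFx' : |D.F x| + D.c * h ≤ |D.F x'| := by
        have h1 := hFt h ⟨hh.le, le_refl h⟩
        have h2 := hFpos' h ⟨hh.le, le_refl h⟩
        rw [← hx'eq] at h1 h2
        rw [abs_of_pos hFpos, abs_of_pos h2]
        linarith
      have hadj : Adj h A x x' := by
        refine ⟨hlx, isLattice_step hlx D.ν, hsideA x (by rw [mem_closedBall]; exact hxhalf) hsx,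
          hsideA x' (by rw [mem_closedBall]; nlinarith [hdx', Nat.cast_nonneg (α := ℝ) n]) hsx',
          D.ν, Or.inl rfl⟩
      obtain ⟨z, hz1, hz2, hz3, hz4, hz5⟩ := ih x' (isLattice_step hlx D.ν) hsx'
        (by push_cast; nlinarith [Nat.cast_nonneg (α := ℝ) n])
        (by push_cast; nlinarith)
      exact ⟨z, hz1, hz2, hz3, hz4, ReflTransGen.head hadj hz5⟩

/-- escape from a neighborhood of a boundary point -/
lemma escape (S : Setup d) {h r₁ : ℝ} (hh : 0 < h) {p : Pt d} (D : LocDat S r₁ p)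
    {A : Set (Pt d)} {side : Pt d → Prop}
    (hsideA : ∀ y, y ∈ closedBall p (D.ρ/2) → side y → y ∈ A)
    (hside_prop : ∀ sset : Set (Pt d), IsPreconnected sset →
      (∀ z ∈ sset, z ∉ frontier S.Ωp) → ∀ a b : Pt d, a ∈ sset → b ∈ sset →
      side a → side b)
    (hside_nf : ∀ y, side y → y ∉ frontier S.Ωp)
    (hh8 : h ≤ D.ρ/8) {x : Pt d} (hxb : x ∈ ball p (D.ρ/4))
    (hlx : IsLattice h x) (hsx : side x) :
    ∃ z : Pt d, IsLattice h z ∧ side z ∧ z ∈ closedBall p (D.ρ/2) ∧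
      D.c * D.ρ / 8 ≤ |D.F z| ∧ ReflTransGen (Adj h A) x z := by
  set n : ℕ := ⌈D.ρ / (8 * h)⌉₊ with hn
  have hρ : 0 < D.ρ := D.ρpos
  have hnge : D.ρ / (8 * h) ≤ (n : ℝ) := Nat.le_ceil _
  have hnlt : (n : ℝ) < D.ρ / (8 * h) + 1 := Nat.ceil_lt_add_one (by positivity)
  have hnh : (n : ℝ) * h ≤ D.ρ / 8 + h := by
    have := mul_lt_mul_of_pos_right hnlt hh
    calc (n : ℝ) * h ≤ (D.ρ / (8*h) + 1) * h := by nlinarith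
      _ = D.ρ/8 + h := by field_simp
  refine escape_core S hh D hsideA hside_prop hside_nf hh8 n x hlx hsx ?_ ?_
  · have := mem_ball.mp hxb
    linarith
  · have h1 : D.c * D.ρ / 8 ≤ (n:ℝ) * (D.c * h) := by
      have h2 : D.ρ / 8 ≤ (n:ℝ) * h := by
        have := mul_le_mul_of_nonneg_right hnge hh.le
        calc D.ρ / 8 = D.ρ / (8*h) * h := by field_simp
          _ ≤ (n:ℝ) * h := this
      calc D.c * D.ρ / 8 = D.c * (D.ρ / 8) := by ring
        _ ≤ D.c * ((n:ℝ) * h) := by nlinarith [D.cpos]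
        _ = (n:ℝ) * (D.c * h) := by ring
    linarith [abs_nonneg (D.F x)]

end Escape

section Cube
variable {d : ℕ}

lemma mem_B_iff (S : Setup d) (x : Pt d) :
    x ∈ S.B ↔ ∀ i, S.a i ≤ x i ∧ x i ≤ S.a i + S.L := by
  show x ∈ Icc _ _ ↔ _
  rw [mem_Icc]
  constructor
  · rintro ⟨h1, h2⟩ i
    exact ⟨h1 i, h2 i⟩
  · intro hi
    exact ⟨fun i => (hi i).1, fun i => (hi i).2⟩

lemma mem_intB_iff (S : Setup d) (x : Pt d) :
    x ∈ interior S.B ↔ ∀ i, S.a i < x i ∧ x i < S.a i + S.L := by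
  have hrw : interior S.B = univ.pi fun i => Ioo (S.a i) (S.a i + S.L) := by
    show interior (Icc _ _) = _
    rw [← pi_univ_Icc, interior_pi_set finite_univ]
    exact Set.pi_congr rfl fun i _ => interior_Icc
  rw [hrw, mem_univ_pi]
  constructor
  · intro hi i; exact mem_Ioo.mp (hi i)
  · intro hi i; exact mem_Ioo.mpr (hi i)

lemma Ωp_subset_B (S : Setup d) : S.Ωp ⊆ S.B :=
  subset_closure.trans (S.closure_subset.trans interior_subset)

end Cube

section Master
variable {d : ℕ}

set_option maxHeartbeats 2000000 in
theorem master (S : Setup d) : ∃ h₀ > (0:ℝ), ∀ h : ℝ, S.Admissible h → h < h₀ →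
    (∀ x ∈ S.Ωhp h, ∀ y ∈ S.Ωhp h, ReflTransGen (Adj h S.Ωp) x y) ∧
    (∀ x ∈ S.Ωhm h, ∀ y ∈ S.Ωhm h, ReflTransGen (Adj h (S.B \ S.Ωp)) x y) := by
  classical
  have hd : 0 < d := by rcases S.dim with h | h <;> omega
  set Γ : Set (Pt d) := frontier S.Ωp with hΓdef
  have hclcpt : IsCompact (closure S.Ωp) :=
    Metric.isCompact_of_isClosed_isBounded isClosed_closure S.bounded_Ωp.closure
  have hΓcpt : IsCompact Γ :=
    hclcpt.of_isClosed_subset isClosed_frontier frontier_subset_closure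
  -- margin radius r₁
  obtain ⟨r₃, hr₃pos, hr₃sub⟩ :=
    hclcpt.exists_cthickening_subset_open isOpen_interior S.closure_subset
  set r₁ : ℝ := r₃ / 3 with hr₁def
  have hr₁pos : 0 < r₁ := by positivity
  have hmarg : ∀ z ∈ closure S.Ωp, ∀ i,
      S.a i + 3 * r₁ ≤ z i ∧ z i ≤ S.a i + S.L - 3 * r₁ := by
    intro z hz i
    have h3r : 3 * r₁ = r₃ := by rw [hr₁def]; ring
    have hmem : ∀ t : ℝ, |t| ≤ r₃ → z + t • evec i ∈ interior S.B := by
      intro t ht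
      refine hr₃sub (mem_cthickening_of_dist_le _ z r₃ _ hz ?_)
      calc dist (z + t • evec i) z = ‖t • evec i‖ := by
            rw [dist_eq_norm, add_sub_cancel_left]
        _ ≤ |t| := by
            rw [norm_smul, Real.norm_eq_abs]
            nlinarith [norm_evec_le (d := d) i, norm_nonneg (evec (d := d) i), abs_nonneg t]
        _ ≤ r₃ := ht
    have hlow := (mem_intB_iff S _).mp (hmem (-(3*r₁)) (by rw [abs_neg, abs_of_pos (by positivity), h3r])) i
    have hhigh := (mem_intB_iff S _).mp (hmem (3*r₁) (by rw [abs_of_pos (by positivity), h3r])) i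
    have he : ∀ t : ℝ, (z + t • evec i) i = z i + t := by
      intro t; simp [evec]
    rw [he] at hlow hhigh
    constructor <;> [linarith [hlow.1]; linarith [hhigh.2]]
  have hΩne : S.Ωp.Nonempty := S.connected_Ωp.nonempty
  have hL6 : 6 * r₁ ≤ S.L := by
    obtain ⟨z, hz⟩ := hΩne
    have := hmarg z (subset_closure hz) ⟨0, hd⟩
    linarith [this.1, this.2]
  have hΓne : Γ.Nonempty := by
    rw [hΓdef]
    by_contra hc
    rw [not_nonempty_iff_eq_empty] at hc
    rcases frontier_eq_empty_iff.mp hc with hc2 | hc2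
    · exact absurd hc2 (Set.nonempty_iff_ne_empty.mp hΩne)
    · set q : Pt d := fun i => S.a i + 2 * S.L with hq
      have hqΩ : q ∈ S.Ωp := hc2 ▸ mem_univ q
      have hqB : q ∈ interior S.B := S.closure_subset (subset_closure hqΩ)
      have := ((mem_intB_iff S q).mp hqB ⟨0, hd⟩).2
      simp only [hq] at this
      nlinarith [S.Lpos]
  -- local data at boundary points
  have hDD : ∀ p : ↥Γ, Nonempty (LocDat S r₁ (p : Pt d)) :=
    fun p => exists_locDat S hr₁pos p.2
  set DD : ∀ p : ↥Γ, LocDat S r₁ (p : Pt d) := fun p => (hDD p).some with hDDdef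
  -- finite subcover of the boundary
  have hcover : Γ ⊆ ⋃ p : ↥Γ, ball (p : Pt d) ((DD p).ρ / 8) := by
    intro q hq
    exact mem_iUnion.mpr ⟨⟨q, hq⟩, mem_ball_self (by have := (DD ⟨q, hq⟩).ρpos; positivity)⟩
  obtain ⟨T, hT⟩ := hΓcpt.elim_finite_subcover _ (fun p : ↥Γ => isOpen_ball) hcover
  have hTne : T.Nonempty := by
    obtain ⟨q, hq⟩ := hΓne
    have := hT hq
    simp only [mem_iUnion] at this
    obtain ⟨p, hpT, _⟩ := this
    exact ⟨p, hpT⟩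
  set r₂ : ℝ := T.inf' hTne fun p => (DD p).ρ / 8 with hr₂def
  have hr₂pos : 0 < r₂ := by
    rw [hr₂def, Finset.lt_inf'_iff]
    intro p _
    have := (DD p).ρpos
    positivity
  have hr₂le : ∀ p ∈ T, r₂ ≤ (DD p).ρ / 8 := fun p hp => Finset.inf'_le _ hp
  have hfar : ∀ x : Pt d, (∀ p ∈ T, x ∉ ball (p : Pt d) ((DD p).ρ / 4)) →
      r₂ ≤ infDist x Γ := by
    intro x hx
    by_contra hc
    push_neg at hc
    obtain ⟨q, hq, hdq⟩ := (infDist_lt_iff hΓne).mp hc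
    have := hT hq
    simp only [mem_iUnion] at this
    obtain ⟨p, hpT, hqball⟩ := this
    refine hx p hpT (mem_ball.mpr ?_)
    have h1 : dist x (p : Pt d) ≤ dist x q + dist q (p : Pt d) := dist_triangle _ _ _
    have h2 : dist q (p : Pt d) < (DD p).ρ / 8 := mem_ball.mp hqball
    have h3 := hr₂le p hpT
    linarith
  -- deep sets
  set tc : ∀ p : ↥Γ, ℝ := fun p => (DD p).c * (DD p).ρ / 8 with htcdef
  have htcpos : ∀ p, 0 < tc p := fun p => by
    have := (DD p).cpos; have := (DD p).ρpos
    rw [htcdef]; positivity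
  set Kp : Set (Pt d) :=
    (closure S.Ωp ∩ {y | r₂ ≤ infDist y Γ}) ∪
      ⋃ p ∈ T, (closedBall (p : Pt d) ((DD p).ρ / 2) ∩ {y | tc p ≤ |(DD p).F y|}
        ∩ closure S.Ωp) with hKpdef
  have hKpclosed : IsClosed Kp := by
    refine IsClosed.union (isClosed_closure.inter ?_)
      (Set.Finite.isClosed_biUnion (T.finite_toSet) fun p _ => ?_)
    · exact isClosed_le continuous_const (continuous_infDist_pt Γ)
    · exact (isClosed_closedBall.inter (isClosed_le continuous_const
        ((DD p).hF.continuous.abs))).inter isClosed_closure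
  have hKpsubcl : Kp ⊆ closure S.Ωp := by
    rintro y (⟨hy, _⟩ | hy)
    · exact hy
    · simp only [mem_iUnion] at hy
      obtain ⟨p, _, _, hy3⟩ := hy
      exact hy3
  have hKpcpt : IsCompact Kp := hclcpt.of_isClosed_subset hKpclosed hKpsubcl
  have hnotfront_of_cl : ∀ y ∈ closure S.Ωp, y ∉ Γ → y ∈ S.Ωp := by
    intro y hy hyf
    by_contra hyΩ
    exact hyf ⟨hy, by rwa [S.isOpen_Ωp.interior_eq]⟩
  have hKpΩ : Kp ⊆ S.Ωp := by
    rintro y (⟨hy1, hy2⟩ | hy)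
    · refine hnotfront_of_cl y hy1 fun hyf => ?_
      rw [mem_setOf_eq, infDist_zero_of_mem hyf] at hy2
      linarith
    · simp only [mem_iUnion] at hy
      obtain ⟨p, hpT, ⟨hy1, hy2⟩, hy3⟩ := hy
      refine hnotfront_of_cl y hy3 fun hyf => ?_
      have hyρ : y ∈ closedBall (p : Pt d) (DD p).ρ := by
        rw [mem_closedBall] at hy1 ⊢
        have := (DD p).ρpos
        linarith
      have := ((DD p).hzero y hyρ).mp (hΓdef ▸ hyf)
      rw [mem_setOf_eq, this, abs_zero] at hy2
      linarith [htcpos p]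
  -- the outer deep set
  set M1 : Set (Pt d) := {y | ∀ i, S.a i + r₁ ≤ y i ∧ y i ≤ S.a i + S.L - r₁} with hM1def
  have hM1closed : IsClosed M1 := by
    have : M1 = univ.pi fun i => Icc (S.a i + r₁) (S.a i + S.L - r₁) := by
      ext y
      simp only [hM1def, mem_setOf_eq, mem_univ_pi, mem_Icc]
    rw [this]
    exact isClosed_set_pi fun i _ => isClosed_Icc
  set M2 : Set (Pt d) := {y | ∃ i, y i ≤ S.a i + 2*r₁ ∨ S.a i + S.L - 2*r₁ ≤ y i} with hM2def
  have hM2closed : IsClosed M2 := by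
    have : M2 = ⋃ i, ((fun y : Pt d => y i) ⁻¹' Iic (S.a i + 2*r₁) ∪
        (fun y : Pt d => y i) ⁻¹' Ici (S.a i + S.L - 2*r₁)) := by
      ext y
      simp only [hM2def, mem_setOf_eq, mem_iUnion, mem_union, mem_preimage, mem_Iic, mem_Ici]
    rw [this]
    exact isClosed_iUnion_of_finite fun i =>
      ((isClosed_Iic.preimage (continuous_apply i)).union
        (isClosed_Ici.preimage (continuous_apply i)))
  set Km : Set (Pt d) :=
    ((M1 ∩ {y | r₂ ≤ infDist y Γ}) ∩ S.Ωpᶜ) ∪ ((M1 ∩ M2) ∩ S.Ωpᶜ) ∪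
      ⋃ p ∈ T, (closedBall (p : Pt d) ((DD p).ρ / 2) ∩ {y | tc p ≤ |(DD p).F y|}
        ∩ S.Ωpᶜ) with hKmdef
  have hKmclosed : IsClosed Km := by
    refine IsClosed.union (IsClosed.union ?_ ?_)
      (Set.Finite.isClosed_biUnion (T.finite_toSet) fun p _ => ?_)
    · exact ((hM1closed.inter (isClosed_le continuous_const (continuous_infDist_pt Γ))).inter
        S.isOpen_Ωp.isClosed_compl)
    · exact (hM1closed.inter hM2closed).inter S.isOpen_Ωp.isClosed_compl
    · exact (isClosed_closedBall.inter (isClosed_le continuous_const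
        ((DD p).hF.continuous.abs))).inter S.isOpen_Ωp.isClosed_compl
  -- points in small balls around boundary points are deep inside B
  have hballB : ∀ p : ↥Γ, ∀ hp : p ∈ T, ∀ y ∈ closedBall (p : Pt d) ((DD p).ρ / 2),
      ∀ i, S.a i + 2*r₁ ≤ y i ∧ y i ≤ S.a i + S.L - 2*r₁ := by
    intro p _ y hy i
    have hpcl : (p : Pt d) ∈ closure S.Ωp := frontier_subset_closure p.2
    have hpm := hmarg (p : Pt d) hpcl i
    have hd1 : dist (y i) ((p : Pt d) i) ≤ dist y (p : Pt d) := dist_le_pi_dist y _ i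
    have hd2 : dist y (p : Pt d) ≤ (DD p).ρ / 2 := mem_closedBall.mp hy
    have hρr : (DD p).ρ ≤ r₁ := (DD p).ρle
    rw [Real.dist_eq, abs_le] at hd1
    constructor <;> [linarith [hpm.1, hd1.1, hd1.2]; linarith [hpm.2, hd1.1, hd1.2]]
  have hKmB : Km ⊆ S.B := by
    rintro y ((⟨⟨hy1, _⟩, _⟩ | ⟨⟨hy1, _⟩, _⟩) | hy)
    · rw [mem_B_iff]
      intro i
      have := hy1 i
      constructor <;> [linarith [this.1, hr₁pos]; linarith [this.2, hr₁pos]]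
    · rw [mem_B_iff]
      intro i
      have := hy1 i
      constructor <;> [linarith [this.1, hr₁pos]; linarith [this.2, hr₁pos]]
    · simp only [mem_iUnion] at hy
      obtain ⟨p, hpT, ⟨hy1, _⟩, _⟩ := hy
      rw [mem_B_iff]
      intro i
      have := hballB p hpT y hy1 i
      constructor <;> [linarith [this.1, hr₁pos]; linarith [this.2, hr₁pos]]
  have hKmcpt : IsCompact Km :=
    (isCompact_Icc).of_isClosed_subset hKmclosed hKmB
  set W : Set (Pt d) := interior S.B \ closure S.Ωp with hWdef
  have hWopen : IsOpen W := isOpen_interior.sdiff isClosed_closure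
  have hWconn : IsPreconnected W := by
    have := S.connected_Ωm.isPreconnected
    exact this
  have hnotcl : ∀ y : Pt d, y ∉ S.Ωp → r₂ ≤ infDist y Γ → y ∉ closure S.Ωp := by
    intro y hy1 hy2 hycl
    rcases em (y ∈ Γ) with hyf | hyf
    · rw [infDist_zero_of_mem hyf] at hy2
      linarith
    · exact hy1 (hnotfront_of_cl y hycl hyf)
  have hKmW : Km ⊆ W := by
    rintro y ((⟨⟨hy1, hy2⟩, hy3⟩ | ⟨⟨hy1, hy2⟩, hy3⟩) | hy)
    · refine ⟨(mem_intB_iff S y).mpr fun i => ?_, hnotcl y hy3 hy2⟩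
      have := hy1 i
      constructor <;> [linarith [this.1, hr₁pos]; linarith [this.2, hr₁pos]]
    · refine ⟨(mem_intB_iff S y).mpr fun i => ?_, fun hycl => ?_⟩
      · have := hy1 i
        constructor <;> [linarith [this.1, hr₁pos]; linarith [this.2, hr₁pos]]
      · obtain ⟨i, hi⟩ := hy2
        have := hmarg y hycl i
        rcases hi with hi | hi <;> linarith [this.1, this.2, hr₁pos]
    · simp only [mem_iUnion] at hy
      obtain ⟨p, hpT, ⟨hy1, hy2⟩, hy3⟩ := hy
      refine ⟨(mem_intB_iff S y).mpr fun i => ?_, fun hycl => ?_⟩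
      · have := hballB p hpT y hy1 i
        constructor <;> [linarith [this.1, hr₁pos]; linarith [this.2, hr₁pos]]
      · have hyρ : y ∈ closedBall (p : Pt d) (DD p).ρ := by
          rw [mem_closedBall] at hy1 ⊢
          have := (DD p).ρpos
          linarith
        rcases em (y ∈ Γ) with hyf | hyf
        · have := ((DD p).hzero y hyρ).mp (hΓdef ▸ hyf)
          rw [mem_setOf_eq, this, abs_zero] at hy2
          linarith [htcpos p]
        · exact hy3 (hnotfront_of_cl y hycl hyf)
  -- uniform chains in the two open regions
  obtain ⟨δp, hδppos, hchp⟩ :=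
    chain_unif S.isOpen_Ωp S.connected_Ωp.isPreconnected hKpcpt hKpΩ
  obtain ⟨δm, hδmpos, hchm⟩ := chain_unif hWopen hWconn hKmcpt hKmW
  -- the threshold
  set h₀ : ℝ := min (min r₁ (T.inf' hTne fun p => (DD p).ρ / 8)) (min (δp/4) (δm/4))
    with hh₀def
  have hh₀pos : 0 < h₀ := by
    rw [hh₀def]
    refine lt_min (lt_min hr₁pos ?_) (lt_min (by linarith) (by linarith))
    rw [Finset.lt_inf'_iff]
    intro p _
    have := (DD p).ρpos
    positivity
  refine ⟨h₀, hh₀pos, fun h hadm hlt => ?_⟩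
  obtain ⟨hh, hlata, hlatL⟩ := hadm
  have hhr₁ : h ≤ r₁ := le_of_lt (lt_of_lt_of_le hlt
    ((min_le_left _ _).trans (min_le_left _ _)))
  have hhρ : ∀ p ∈ T, h ≤ (DD p).ρ / 8 := fun p hp => le_of_lt (lt_of_lt_of_le hlt
    ((min_le_left _ _).trans ((min_le_right _ _).trans (Finset.inf'_le _ hp))))
  have hhδp : h ≤ δp / 4 := le_of_lt (lt_of_lt_of_le hlt
    ((min_le_right _ _).trans (min_le_left _ _)))
  have hhδm : h ≤ δm / 4 := le_of_lt (lt_of_lt_of_le hlt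
    ((min_le_right _ _).trans (min_le_right _ _)))
  constructor
  · -- plus side connectivity
    intro x hx y hy
    obtain ⟨hlx, hxΩ⟩ := hx
    obtain ⟨hly, hyΩ⟩ := hy
    have toDeep : ∀ w : Pt d, IsLattice h w → w ∈ S.Ωp →
        ∃ z, IsLattice h z ∧ z ∈ Kp ∧ ReflTransGen (Adj h S.Ωp) w z := by
      intro w hlw hwΩ
      by_cases hnear : ∃ p ∈ T, w ∈ ball (p : Pt d) ((DD p).ρ / 4)
      · obtain ⟨p, hpT, hwball⟩ := hnear
        obtain ⟨z, hz1, hz2, hz3, hz4, hz5⟩ := escape S hh (DD p) (A := S.Ωp)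
          (side := fun y => y ∈ S.Ωp)
          (fun y _ hy => hy)
          (fun sset hc hnf a b ha hb hsa => (side_prop S.isOpen_Ωp hc hnf ha hb).1 hsa)
          (fun y hy hyf => ((S.isOpen_Ωp.frontier_eq ▸ hyf).2 : y ∉ S.Ωp) hy)
          (hhρ p hpT) hwball hlw hwΩ
        refine ⟨z, hz1, Or.inr ?_, hz5⟩
        simp only [mem_iUnion]
        exact ⟨p, hpT, ⟨hz3, hz4⟩, subset_closure hz2⟩
      · push_neg at hnear
        exact ⟨w, hlw, Or.inl ⟨subset_closure hwΩ, hfar w hnear⟩, ReflTransGen.refl⟩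
    obtain ⟨zx, hzx1, hzx2, hzx3⟩ := toDeep x hlx hxΩ
    obtain ⟨zy, hzy1, hzy2, hzy3⟩ := toDeep y hly hyΩ
    have hmid0 := hchp (δp/3) (by linarith) zx hzx2 zy hzy2
    have hmid : ReflTransGen (Adj h S.Ωp) zx zy :=
      shadow_chain hh subset_rfl (by linarith) (by linarith) hmid0 hzx1 hzy1
    exact hzx3.trans (hmid.trans ((@Relation.ReflTransGen.stdSymm _ _ ⟨fun _ _ hab => Adj.symm' hab⟩).symm _ _ hzy3))
  · -- minus side connectivity
    intro x hx y hy
    obtain ⟨hlx, hxΩ⟩ := hx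
    obtain ⟨hly, hyΩ⟩ := hy
    have hxW : x ∈ W := hxΩ
    have hyW : y ∈ W := hyΩ
    have hWA : W ⊆ S.B \ S.Ωp :=
      fun v hv => ⟨interior_subset hv.1, fun h2 => hv.2 (subset_closure h2)⟩
    have toDeep : ∀ w : Pt d, IsLattice h w → w ∈ W →
        ∃ z, IsLattice h z ∧ z ∈ Km ∧ ReflTransGen (Adj h (S.B \ S.Ωp)) w z := by
      intro w hlw hwW
      obtain ⟨hwi, hwc⟩ := hwW
      have hwB : w ∈ S.B := interior_subset hwi
      have hwΩ : w ∉ S.Ωp := fun hw => hwc (subset_closure hw)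
      by_cases hm : ∀ i, S.a i + r₁ ≤ w i ∧ w i ≤ S.a i + S.L - r₁
      · by_cases hnear : ∃ p ∈ T, w ∈ ball (p : Pt d) ((DD p).ρ / 4)
        · obtain ⟨p, hpT, hwball⟩ := hnear
          obtain ⟨z, hz1, hz2, hz3, hz4, hz5⟩ := escape S hh (DD p) (A := S.B \ S.Ωp)
            (side := fun y => y ∉ closure S.Ωp)
            (fun y hyb hyc => ⟨(mem_B_iff S y).mpr fun i => by
                have := hballB p hpT y hyb i
                constructor <;> [linarith [this.1, hr₁pos]; linarith [this.2, hr₁pos]],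
              fun hy => hyc (subset_closure hy)⟩)
            (fun sset hc hnf a b ha hb hsa => (side_prop S.isOpen_Ωp hc hnf ha hb).2 hsa)
            (fun y hy hyf => hy (frontier_subset_closure hyf))
            (hhρ p hpT) hwball hlw hwc
          refine ⟨z, hz1, Or.inr ?_, hz5⟩
          simp only [mem_iUnion]
          exact ⟨p, hpT, ⟨hz3, hz4⟩, fun hz => hz2 (subset_closure hz)⟩
        · push_neg at hnear
          exact ⟨w, hlw, Or.inl (Or.inl ⟨⟨hm, hfar w hnear⟩, hwΩ⟩), ReflTransGen.refl⟩
      · -- clamp towards the interior of B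
        push_neg at hm
        obtain ⟨i₀, hi₀⟩ := hm
        set k₁ : ℕ := ⌈r₁ / h⌉₊ with hk₁def
        have hk₁low : r₁ ≤ (k₁ : ℝ) * h := by
          have h1 := Nat.le_ceil (r₁ / h)
          have h2 := mul_le_mul_of_nonneg_right h1 hh.le
          calc r₁ = r₁ / h * h := by field_simp
            _ ≤ (k₁:ℝ) * h := h2
        have hk₁high : (k₁ : ℝ) * h ≤ r₁ + h := by
          have h1 : (k₁:ℝ) < r₁/h + 1 :=
            Nat.ceil_lt_add_one (show (0:ℝ) ≤ r₁ / h by positivity)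
          have h2 : (k₁:ℝ) * h ≤ (r₁/h + 1) * h := by nlinarith
          calc (k₁:ℝ)*h ≤ (r₁/h + 1)*h := h2
            _ = r₁ + h := by field_simp
        set w' : Pt d := fun i => if w i < S.a i + r₁ then S.a i + k₁*h
          else if S.a i + S.L - r₁ < w i then S.a i + S.L - k₁*h else w i with hw'def
        have hlw' : IsLattice h w' := by
          intro i
          obtain ⟨ma, hma⟩ := hlata i
          obtain ⟨n, hn⟩ := hlatL
          obtain ⟨mw, hmw⟩ := hlw i
          simp only [hw'def]
          by_cases h1 : w i < S.a i + r₁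
          · refine ⟨ma + k₁, ?_⟩
            rw [if_pos h1, hma]
            push_cast
            ring
          · by_cases h2 : S.a i + S.L - r₁ < w i
            · refine ⟨ma + n - k₁, ?_⟩
              rw [if_neg h1, if_pos h2, hma, hn]
              push_cast
              ring
            · exact ⟨mw, by rw [if_neg h1, if_neg h2, hmw]⟩
        have hwBi := (mem_B_iff S w).mp hwB
        have hw'm : ∀ i, S.a i + r₁ ≤ w' i ∧ w' i ≤ S.a i + S.L - r₁ := by
          intro i
          simp only [hw'def]
          by_cases h1 : w i < S.a i + r₁
          · rw [if_pos h1]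
            constructor
            · linarith [hk₁low]
            · linarith [hk₁high, hL6, hhr₁]
          · rw [if_neg h1]
            by_cases h2 : S.a i + S.L - r₁ < w i
            · rw [if_pos h2]
              constructor
              · linarith [hk₁high, hL6, hhr₁]
              · linarith [hk₁low]
            · rw [if_neg h2]
              push_neg at h1 h2
              exact ⟨h1, h2⟩
        have hbox : ∀ z : Pt d, IsLattice h z →
            (∀ i, min (w i) (w' i) ≤ z i ∧ z i ≤ max (w i) (w' i)) → z ∈ S.B \ S.Ωp := by
          intro z hz hzb
          have hzB : z ∈ S.B := by
            rw [mem_B_iff]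
            intro i
            have h1 := (hzb i).1
            have h2 := (hzb i).2
            have hw1 := hwBi i
            have hw2 := hw'm i
            constructor
            · have h3 : S.a i ≤ min (w i) (w' i) :=
                le_min hw1.1 (by linarith [hw2.1, hr₁pos])
              linarith
            · have h3 : max (w i) (w' i) ≤ S.a i + S.L :=
                max_le hw1.2 (by linarith [hw2.2, hr₁pos])
              linarith
          refine ⟨hzB, fun hzΩ => ?_⟩
          have hzm := hmarg z (subset_closure hzΩ) i₀
          have h1 := (hzb i₀).1
          have h2 := (hzb i₀).2
          rcases lt_or_ge (w i₀) (S.a i₀ + r₁) with hc1 | hc1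
          · have hw'i : w' i₀ = S.a i₀ + k₁*h := by
              simp only [hw'def]
              rw [if_pos hc1]
            have hmax : max (w i₀) (w' i₀) ≤ S.a i₀ + r₁ + h := by
              refine max_le (by linarith [hh.le]) ?_
              rw [hw'i]
              linarith [hk₁high]
            linarith [hzm.1, hhr₁, hr₁pos]
          · have hc2 : S.a i₀ + S.L - r₁ < w i₀ := hi₀ hc1
            have hw'i : w' i₀ = S.a i₀ + S.L - k₁*h := by
              simp only [hw'def]
              rw [if_neg (not_lt.mpr hc1), if_pos hc2]
            have hmin : S.a i₀ + S.L - r₁ - h ≤ min (w i₀) (w' i₀) := by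
              refine le_min (by linarith [hh.le]) ?_
              rw [hw'i]
              linarith [hk₁high]
            linarith [hzm.2, hhr₁, hr₁pos]
        have hchain : ReflTransGen (Adj h (S.B \ S.Ωp)) w w' := grid_path hh hlw hlw' hbox
        have hw'box := hbox w' hlw' (fun i => ⟨min_le_right _ _, le_max_right _ _⟩)
        have hw'Km : w' ∈ Km := by
          refine Or.inl (Or.inr ⟨⟨hw'm, ?_⟩, hw'box.2⟩)
          rcases lt_or_ge (w i₀) (S.a i₀ + r₁) with hc1 | hc1
          · refine ⟨i₀, Or.inl ?_⟩
            have hw'i : w' i₀ = S.a i₀ + k₁*h := by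
              simp only [hw'def]
              rw [if_pos hc1]
            rw [hw'i]
            linarith [hk₁high, hhr₁]
          · have hc2 : S.a i₀ + S.L - r₁ < w i₀ := hi₀ hc1
            refine ⟨i₀, Or.inr ?_⟩
            have hw'i : w' i₀ = S.a i₀ + S.L - k₁*h := by
              simp only [hw'def]
              rw [if_neg (not_lt.mpr hc1), if_pos hc2]
            rw [hw'i]
            linarith [hk₁high, hhr₁]
        exact ⟨w', hlw', hw'Km, hchain⟩
    obtain ⟨zx, hzx1, hzx2, hzx3⟩ := toDeep x hlx hxW
    obtain ⟨zy, hzy1, hzy2, hzy3⟩ := toDeep y hly hyW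
    have hmid0 := hchm (δm/3) (by linarith) zx hzx2 zy hzy2
    have hmid : ReflTransGen (Adj h (S.B \ S.Ωp)) zx zy :=
      shadow_chain hh hWA (by linarith) (by linarith) hmid0 hzx1 hzy1
    exact hzx3.trans (hmid.trans ((@Relation.ReflTransGen.stdSymm _ _ ⟨fun _ _ hab => Adj.symm' hab⟩).symm _ _ hzy3))

end Master

end Aux

end DiscretePotential
open DiscretePotential DiscretePotential.Setup in
/-- Corollary 2.2: vanishing divided differences force constancy. -/
theorem constant_of_vanishing_differences (d : ℕ) (S : Setup d) :
    ∃ h₀ > (0 : ℝ), ∀ h : ℝ, S.Admissible h → h < h₀ →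
      (∀ u : Pt d → ℝ, (∀ I ∈ S.Ip h, (u (step h I.1 I.2) - u I.1) / h = 0) →
        ∀ x ∈ S.Ωhp h, ∀ y ∈ S.Ωhp h, u x = u y) ∧
      (∀ u : Pt d → ℝ, (∀ I ∈ S.Im h, (u (step h I.1 I.2) - u I.1) / h = 0) →
        ∀ x ∈ S.Ωhm h, ∀ y ∈ S.Ωhm h, u x = u y) := by
  obtain ⟨h₀, hh₀, hmain⟩ := master S
  refine ⟨h₀, hh₀, fun h hadm hlt => ?_⟩
  have hh : 0 < h := hadm.1
  obtain ⟨hplus, hminus⟩ := hmain h hadm hlt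
  constructor
  · intro u hu x hx y hy
    have huAdj : ∀ a b : Pt d, Adj h S.Ωp a b → u a = u b := by
      rintro a b ⟨la, lb, ma, mb, ν, hcase | hcase⟩
      · have hIp : (a, ν) ∈ S.Ip h := by
          refine ⟨⟨la, Ωp_subset_B S ma, ?_⟩, ma, ?_⟩
          · rw [← hcase]; exact Ωp_subset_B S mb
          · rw [← hcase]; exact mb
        have h0 := hu (a, ν) hIp
        rw [div_eq_zero_iff] at h0
        rcases h0 with h0 | h0
        · rw [hcase]
          exact (sub_eq_zero.mp h0).symm
        · exact absurd h0 hh.ne'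
      · have hIp : (b, ν) ∈ S.Ip h := by
          refine ⟨⟨lb, Ωp_subset_B S mb, ?_⟩, mb, ?_⟩
          · rw [← hcase]; exact Ωp_subset_B S ma
          · rw [← hcase]; exact ma
        have h0 := hu (b, ν) hIp
        rw [div_eq_zero_iff] at h0
        rcases h0 with h0 | h0
        · rw [← hcase] at h0
          exact sub_eq_zero.mp h0
        · exact absurd h0 hh.ne'
    exact adj_chain_congr huAdj (hplus x hx y hy)
  · intro u hu x hx y hy
    have huAdj : ∀ a b : Pt d, Adj h (S.B \ S.Ωp) a b → u a = u b := by
      rintro a b ⟨la, lb, ma, mb, ν, hcase | hcase⟩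
      · have hIm : (a, ν) ∈ S.Im h := by
          refine ⟨⟨la, ma.1, ?_⟩, ma.2, ?_⟩
          · rw [← hcase]; exact mb.1
          · rw [← hcase]; exact mb.2
        have h0 := hu (a, ν) hIm
        rw [div_eq_zero_iff] at h0
        rcases h0 with h0 | h0
        · rw [hcase]
          exact (sub_eq_zero.mp h0).symm
        · exact absurd h0 hh.ne'
      · have hIm : (b, ν) ∈ S.Im h := by
          refine ⟨⟨lb, mb.1, ?_⟩, mb.2, ?_⟩
          · rw [← hcase]; exact ma.1
          · rw [← hcase]; exact ma.2
        have h0 := hu (b, ν) hIm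
        rw [div_eq_zero_iff] at h0
        rcases h0 with h0 | h0
        · rw [← hcase] at h0
          exact sub_eq_zero.mp h0
        · exact absurd h0 hh.ne'
    exact adj_chain_congr huAdj (hminus x hx y hy)
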